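/- Let U ⊆ ℝ² be open with coordinates (ρ, p) and ρ + p ≠ 0 on U, let χ : U → ℝ, and let n, s : U → ℝ be differentiable with n ≠ 0 and ∂ps ≠ 0 on U, satisfying ∂ρn + χ·∂pn = n/(ρ+p) and ∂ρs + χ·∂ps = 0. Define the specific internal energy ε := ρ/n − 1 and the temperature Θ := −(ρ+p)·∂pn/(n²·∂ps). Then the Gibbs relation Θ ds = dε + p d(1/n) holds componentwise on U, i.e. Θ·∂ρs = ∂ρε + p·∂ρ(1/n) and Θ·∂ps = ∂pε + p·∂p(1/n); in particular n²·Θ·∂ρs = n − (ρ+p)·∂ρn, so wherever ∂ρs ≠ 0 the two temperature expressions Θ^p := −(ρ+p)∂pn/(n²∂ps) and Θ^ρ := (1/∂ρs)(1/n − (ρ+p)∂ρn/n²) coincide. -/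

import Mathlib

noncomputable section

/-- Partial derivative with respect to the first coordinate (the energy density ρ). -/
def pd1 (f : ℝ × ℝ → ℝ) (x y : ℝ) : ℝ := deriv (fun t => f (t, y)) x

/-- Partial derivative with respect to the second coordinate (the pressure p). -/
def pd2 (f : ℝ × ℝ → ℝ) (x y : ℝ) : ℝ := deriv (fun t => f (x, t)) y

/-- If `n` solves the matter conservation equation and `s` solves the entropy conservation
equation, then with `ε := ρ/n − 1` and `Θ := −(ρ+p)∂ₚn/(n²∂ₚs)` the Gibbs relation
`Θ ds = dε + p d(1/n)` holds componentwise; in particular the two temperature expressions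
`Θ^p` and `Θ^ρ` coincide wherever `∂_ρ s ≠ 0`. -/
theorem gibbs_relation_from_conservation
    (U : Set (ℝ × ℝ)) (hU : IsOpen U)
    (hsum : ∀ x y : ℝ, (x, y) ∈ U → x + y ≠ 0)
    (χ n s : ℝ × ℝ → ℝ)
    (hdn : ∀ x y : ℝ, (x, y) ∈ U → DifferentiableAt ℝ n (x, y))
    (hds : ∀ x y : ℝ, (x, y) ∈ U → DifferentiableAt ℝ s (x, y))
    (hn0 : ∀ x y : ℝ, (x, y) ∈ U → n (x, y) ≠ 0)
    (hsp : ∀ x y : ℝ, (x, y) ∈ U → pd2 s x y ≠ 0)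
    (hmatter : ∀ x y : ℝ, (x, y) ∈ U →
      pd1 n x y + χ (x, y) * pd2 n x y = n (x, y) / (x + y))
    (hentropy : ∀ x y : ℝ, (x, y) ∈ U →
      pd1 s x y + χ (x, y) * pd2 s x y = 0) :
    ∀ x y : ℝ, (x, y) ∈ U →
      ((-((x + y) * pd2 n x y / ((n (x, y)) ^ 2 * pd2 s x y))) * pd1 s x y
          = pd1 (fun q => q.1 / n q - 1) x y + y * pd1 (fun q => 1 / n q) x y)
      ∧ ((-((x + y) * pd2 n x y / ((n (x, y)) ^ 2 * pd2 s x y))) * pd2 s x y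
          = pd2 (fun q => q.1 / n q - 1) x y + y * pd2 (fun q => 1 / n q) x y)
      ∧ ((n (x, y)) ^ 2 * (-((x + y) * pd2 n x y / ((n (x, y)) ^ 2 * pd2 s x y))) * pd1 s x y
          = n (x, y) - (x + y) * pd1 n x y)
      ∧ (pd1 s x y ≠ 0 →
          -((x + y) * pd2 n x y / ((n (x, y)) ^ 2 * pd2 s x y))
            = (1 / pd1 s x y) * (1 / n (x, y) - (x + y) * pd1 n x y / (n (x, y)) ^ 2)) := by
  intro x y hxy
  have hsum' := hsum x y hxy
  have hn0' := hn0 x y hxy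
  have hsp' := hsp x y hxy
  -- differentiability of the slices
  have hcurve1 : DifferentiableAt ℝ (fun t : ℝ => (t, y)) x :=
    differentiableAt_id.prodMk (differentiableAt_const y)
  have hcurve2 : DifferentiableAt ℝ (fun t : ℝ => (x, t)) y :=
    (differentiableAt_const x).prodMk differentiableAt_id
  have hg1 : DifferentiableAt ℝ (fun t => n (t, y)) x :=
    (hdn x y hxy).comp x hcurve1
  have hg2 : DifferentiableAt ℝ (fun t => n (x, t)) y :=
    (hdn x y hxy).comp y hcurve2
  set a := n (x, y) with ha
  set nρ := pd1 n x y with hnρ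
  set np := pd2 n x y with hnp
  set sρ := pd1 s x y with hsρ
  set sp := pd2 s x y with hspdef
  have hD1 : HasDerivAt (fun t => n (t, y)) nρ x := hg1.hasDerivAt
  have hD2 : HasDerivAt (fun t => n (x, t)) np y := hg2.hasDerivAt
  -- derivative of ε = ρ/n − 1 in ρ
  have hE1 : pd1 (fun q => q.1 / n q - 1) x y = (a - x * nρ) / a ^ 2 := by
    have h : HasDerivAt (fun t : ℝ => t / n (t, y) - 1)
        ((1 * a - x * nρ) / a ^ 2) x :=
      ((hasDerivAt_id x).div hD1 hn0').sub_const 1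
    have := h.deriv
    simpa [pd1, one_mul] using this
  have hE2 : pd2 (fun q => q.1 / n q - 1) x y = (- (x * np)) / a ^ 2 := by
    have h : HasDerivAt (fun t : ℝ => x / n (x, t) - 1)
        ((0 * a - x * np) / a ^ 2) y :=
      ((hasDerivAt_const y x).div hD2 hn0').sub_const 1
    have := h.deriv
    simpa [pd2] using this
  have hI1 : pd1 (fun q => 1 / n q) x y = (- nρ) / a ^ 2 := by
    have h : HasDerivAt (fun t : ℝ => 1 / n (t, y))
        ((0 * a - 1 * nρ) / a ^ 2) x :=
      (hasDerivAt_const x 1).div hD1 hn0'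
    have := h.deriv
    simpa [pd1] using this
  have hI2 : pd2 (fun q => 1 / n q) x y = (- np) / a ^ 2 := by
    have h : HasDerivAt (fun t : ℝ => 1 / n (x, t))
        ((0 * a - 1 * np) / a ^ 2) y :=
      (hasDerivAt_const y 1).div hD2 hn0'
    have := h.deriv
    simpa [pd2] using this
  have hm := hmatter x y hxy
  have he := hentropy x y hxy
  rw [← hnρ, ← hnp, ← ha] at hm
  rw [← hsρ, ← hspdef] at he
  have hsρeq : sρ = -(χ (x, y) * sp) := by linarith
  have hm' : (nρ + χ (x, y) * np) * (x + y) = a := by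
    rw [eq_comm, div_eq_iff hsum'] at hm
    linarith
  have key : -((x + y) * np / (a ^ 2 * sp)) * sρ = (a - (x + y) * nρ) / a ^ 2 := by
    have h1 : -((x + y) * np / (a ^ 2 * sp)) * sρ
        = (x + y) * (χ (x, y) * np) / a ^ 2 := by
      rw [hsρeq]; field_simp
    have h2 : (x + y) * (χ (x, y) * np) = a - (x + y) * nρ := by
      linear_combination hm'
    rw [h1, h2]
  refine ⟨?_, ?_, ?_, ?_⟩
  · rw [hE1, hI1, key]; field_simp; ring
  · rw [hE2, hI2]
    field_simp
    ring
  · have := key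
    field_simp at this ⊢
    linarith [this]
  · intro hsρ0
    have h2 : -((x + y) * np / (a ^ 2 * sp)) = ((a - (x + y) * nρ) / a ^ 2) / sρ := by
      rw [eq_div_iff hsρ0, key]
    rw [h2]
    field_simp
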